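/- Let E be a real Banach space, let e : ℝ → E be continuous, and let t, h ∈ ℝ with h ≥ 0. Then ∫₀^h ( ∫₀^ζ ( ∫₀^ξ ( e(t+χ) − e(t+ξ) ) dχ ) dξ ) dζ = (1/2) ∫₀^h ( 3ζ² − 4hζ + h² ) e(t+ζ) dζ. -/

import Mathlib

open intervalIntegral MeasureTheory

/-- Integration-by-parts reduction: if `f z = 0`, then
`∫₀^z f' x • (∫₀^x ψ) dx = ∫₀^z (-f x) • ψ x dx`. -/
lemma parts_aux {E : Type*} [NormedAddCommGroup E] [NormedSpace ℝ E] [CompleteSpace E]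
    (ψ : ℝ → E) (hψ : Continuous ψ) (f f' : ℝ → ℝ)
    (hf : ∀ x, HasDerivAt f (f' x) x) (hf' : Continuous f') (z : ℝ) (hz : f z = 0) :
    (∫ x in (0:ℝ)..z, f' x • (∫ u in (0:ℝ)..x, ψ u))
      = ∫ x in (0:ℝ)..z, (-f x) • ψ x := by
  set Ψ : ℝ → E := fun x => ∫ u in (0:ℝ)..x, ψ u with hΨdef
  have hΨd : ∀ x : ℝ, HasDerivAt Ψ (ψ x) x := fun x =>
    (hψ.integral_hasStrictDerivAt 0 x).hasDerivAt
  have hΨc : Continuous Ψ := continuous_iff_continuousAt.2 fun x => (hΨd x).continuousAt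
  have hfc : Continuous f := continuous_iff_continuousAt.2 fun x => (hf x).continuousAt
  have key : (∫ x in (0:ℝ)..z, (f x • ψ x + f' x • Ψ x)) = f z • Ψ z - f 0 • Ψ 0 :=
    integral_eq_sub_of_hasDerivAt (fun x _ => (hf x).smul (hΨd x))
      (((hfc.smul hψ).add (hf'.smul hΨc)).intervalIntegrable 0 z)
  have hΨ0 : Ψ 0 = 0 := by simp [hΨdef]
  rw [hz, hΨ0, zero_smul, smul_zero, sub_zero,
    integral_add ((show Continuous fun x => f x • ψ x from hfc.smul hψ).intervalIntegrable 0 z)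
      ((show Continuous fun x => f' x • Ψ x from hf'.smul hΨc).intervalIntegrable 0 z)] at key
  rw [eq_neg_of_add_eq_zero_right key, ← intervalIntegral.integral_neg]
  simp only [neg_smul]

theorem theta32_integral_reduction {E : Type*} [NormedAddCommGroup E] [NormedSpace ℝ E]
    [CompleteSpace E] (e : ℝ → E) (he : Continuous e) (t h : ℝ) (hh : 0 ≤ h) :
    (∫ ζ in (0:ℝ)..h, ∫ ξ in (0:ℝ)..ζ, ∫ χ in (0:ℝ)..ξ, (e (t + χ) - e (t + ξ)))
      = (1 / 2 : ℝ) • ∫ ζ in (0:ℝ)..h, (3 * ζ ^ 2 - 4 * h * ζ + h ^ 2) • e (t + ζ) := by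
  have hφ : Continuous fun x : ℝ => e (t + x) := by fun_prop
  set φ : ℝ → E := fun x => e (t + x) with hφdef
  set F : ℝ → E := fun x => ∫ u in (0:ℝ)..x, φ u with hFdef
  set G : ℝ → E := fun x => ∫ u in (0:ℝ)..x, u • φ u with hGdef
  have hφ2 : Continuous fun u : ℝ => u • φ u := continuous_id'.smul hφ
  have hFc : Continuous F := continuous_iff_continuousAt.2 fun x =>
    ((hφ.integral_hasStrictDerivAt 0 x).hasDerivAt).continuousAt
  have hGc : Continuous G := continuous_iff_continuousAt.2 fun x =>
    ((hφ2.integral_hasStrictDerivAt 0 x).hasDerivAt).continuousAt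
  -- ∫₀^z F = z • F z - G z
  have hA : ∀ z : ℝ, (∫ x in (0:ℝ)..z, F x) = z • F z - G z := by
    intro z
    have key := parts_aux φ hφ (fun x => x - z) (fun _ => 1)
      (fun x => (hasDerivAt_id x).sub_const z) continuous_const z (by simp)
    simp only [one_smul, neg_sub] at key
    refine (key.trans ?_ : _)
    have hsplit : ∀ x : ℝ, (z - x) • φ x = z • φ x - x • φ x := fun x => sub_smul z x (φ x)
    simp_rw [hsplit]
    rw [intervalIntegral.integral_sub ((show Continuous fun x => z • φ x from continuous_const.smul hφ).intervalIntegrable 0 z)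
      (hφ2.intervalIntegrable 0 z), intervalIntegral.integral_smul]
  -- middle integral
  have hstep : ∀ ζ : ℝ,
      (∫ ξ in (0:ℝ)..ζ, ∫ χ in (0:ℝ)..ξ, (e (t + χ) - e (t + ξ)))
        = ζ • F ζ - G ζ - G ζ := by
    intro ζ
    have hinner : ∀ ξ : ℝ, (∫ χ in (0:ℝ)..ξ, (e (t + χ) - e (t + ξ))) = F ξ - ξ • φ ξ := by
      intro ξ
      rw [intervalIntegral.integral_sub (hφ.intervalIntegrable 0 ξ)
        (intervalIntegrable_const), intervalIntegral.integral_const]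
      simp
      rfl
    simp_rw [hinner]
    rw [intervalIntegral.integral_sub (hFc.intervalIntegrable 0 ζ)
      (hφ2.intervalIntegrable 0 ζ), hA ζ]
  simp_rw [hstep]
  have c1 : Continuous fun ζ : ℝ => ζ • F ζ := continuous_id'.smul hFc
  rw [intervalIntegral.integral_sub ((show Continuous fun ζ : ℝ => ζ • F ζ - G ζ from c1.sub hGc).intervalIntegrable 0 h)
      (hGc.intervalIntegrable 0 h),
    intervalIntegral.integral_sub (c1.intervalIntegrable 0 h) (hGc.intervalIntegrable 0 h)]
  -- B : ∫₀^h x • F x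
  have hB : (∫ x in (0:ℝ)..h, x • F x) = ∫ x in (0:ℝ)..h, ((h ^ 2 - x ^ 2) / 2) • φ x := by
    have hd : ∀ x : ℝ, HasDerivAt (fun x : ℝ => (x ^ 2 - h ^ 2) / 2) x x := by
      intro x
      have := ((hasDerivAt_pow 2 x).sub_const (h ^ 2)).div_const 2
      convert this using 1
      exacts [rfl, rfl, by simp]
    have key := parts_aux φ hφ (fun x => (x ^ 2 - h ^ 2) / 2) (fun x => x) hd continuous_id h
      (by ring)
    refine (key.trans ?_ : _)
    congr 1 with x
    congr 1
    ring
  -- C : ∫₀^h G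
  have hC : (∫ x in (0:ℝ)..h, G x) = ∫ x in (0:ℝ)..h, ((h - x) * x) • φ x := by
    have key := parts_aux (fun u => u • φ u) hφ2 (fun x => x - h) (fun _ => 1)
      (fun x => (hasDerivAt_id x).sub_const h) continuous_const h (by simp)
    simp only [one_smul, neg_sub] at key
    refine (key.trans ?_ : _)
    congr 1 with x
    rw [smul_smul]
  rw [hB, hC, ← intervalIntegral.integral_smul]
  have cc1 : Continuous fun x : ℝ => ((h ^ 2 - x ^ 2) / 2) • φ x :=
    (by fun_prop : Continuous fun x : ℝ => (h ^ 2 - x ^ 2) / 2).smul hφ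
  have cc2 : Continuous fun x : ℝ => ((h - x) * x) • φ x :=
    (by fun_prop : Continuous fun x : ℝ => (h - x) * x).smul hφ
  rw [← intervalIntegral.integral_sub (cc1.intervalIntegrable 0 h) (cc2.intervalIntegrable 0 h),
    ← intervalIntegral.integral_sub ((show Continuous fun x : ℝ =>
        ((h ^ 2 - x ^ 2) / 2) • φ x - ((h - x) * x) • φ x from cc1.sub cc2).intervalIntegrable 0 h)
      (cc2.intervalIntegrable 0 h)]
  congr 1 with ζ
  rw [← sub_smul, ← sub_smul, smul_smul]
  congr 1
  ring
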